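/- Let δ = 2^{-mT} with m,T ∈ ℕ, and let P be a {2^{-jT}}_{j=1}^m-uniform family of dyadic δ-cubes in [0,1)^d satisfying c·Δ^{-t} ≤ |P|_Δ ≤ C·Δ^{-t} for all Δ ∈ [δ, Δ₀], where t ∈ [0,d] and Δ₀ ∈ (δ,1]. Then for all dyadic δ ≤ r ≤ R ≤ 1 and every dyadic R-cube Q, one has |P ∩ Q|_r ≲_{d,T,Δ₀} (C/c)(R/r)^t. -/

import Mathlib

noncomputable def covN (d : ℕ) (ρ : ℝ) (X : Set (EuclideanSpace ℝ (Fin d))) : ℕ :=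
  Set.ncard {k : Fin d → ℤ | ∃ x ∈ X, ∀ i, (k i : ℝ) * ρ ≤ x i ∧ x i < ((k i : ℝ) + 1) * ρ}

def dyCube (d : ℕ) (ρ : ℝ) (k : Fin d → ℤ) : Set (EuclideanSpace ℝ (Fin d)) :=
  {x | ∀ i, (k i : ℝ) * ρ ≤ x i ∧ x i < ((k i : ℝ) + 1) * ρ}

def unitBox (d : ℕ) : Set (EuclideanSpace ℝ (Fin d)) :=
  {x | ∀ i, 0 ≤ x i ∧ x i < 1}

def IsUniform (d T m : ℕ) (P : Set (EuclideanSpace ℝ (Fin d))) : Prop :=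
  ∃ N : ℕ → ℕ, (∀ j, 1 ≤ j → j ≤ m → ∃ i : ℕ, N j = 2 ^ i) ∧
    ∀ j, 1 ≤ j → j ≤ m → ∀ k : Fin d → ℤ,
      (P ∩ dyCube d ((2:ℝ) ^ (-(((j - 1) * T : ℕ) : ℤ))) k).Nonempty →
      covN d ((2:ℝ) ^ (-((j * T : ℕ) : ℤ)))
        (P ∩ dyCube d ((2:ℝ) ^ (-(((j - 1) * T : ℕ) : ℤ))) k) = N j

namespace Stmt12

variable {d : ℕ}

/-- the floor map at scale `2^{-n}` -/
noncomputable def fl (d n : ℕ) (x : EuclideanSpace ℝ (Fin d)) : Fin d → ℤ :=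
  fun i => ⌊x i * 2 ^ n⌋

/-- coordinatewise integer division -/
def qt (d : ℕ) (M : ℤ) (k : Fin d → ℤ) : Fin d → ℤ := fun i => k i / M

lemma mem_cube_iff (n : ℕ) (k : Fin d → ℤ) (x : EuclideanSpace ℝ (Fin d)) :
    ((∀ i, (k i : ℝ) * (2:ℝ) ^ (-(n:ℤ)) ≤ x i ∧ x i < ((k i : ℝ) + 1) * (2:ℝ) ^ (-(n:ℤ))))
      ↔ fl d n x = k := by
  have hc : (0:ℝ) < 2 ^ n := by positivity
  have h2 : ((2:ℝ) ^ (-(n:ℤ))) = ((2:ℝ) ^ n)⁻¹ := by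
    rw [zpow_neg, zpow_natCast]
  rw [funext_iff]
  refine forall_congr' fun i => ?_
  rw [h2, ← div_eq_mul_inv, ← div_eq_mul_inv, div_le_iff₀ hc, lt_div_iff₀ hc, fl,
    Int.floor_eq_iff]

lemma cube_eq_preimage (n : ℕ) (k : Fin d → ℤ) :
    dyCube d ((2:ℝ) ^ (-(n:ℤ))) k = fl d n ⁻¹' {k} := by
  ext x
  simpa [dyCube] using mem_cube_iff n k x

lemma covN_eq (n : ℕ) (X : Set (EuclideanSpace ℝ (Fin d))) :
    covN d ((2:ℝ) ^ (-(n:ℤ))) X = (fl d n '' X).ncard := by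
  unfold covN
  congr 1
  ext k
  simp only [Set.mem_setOf_eq, Set.mem_image]
  constructor
  · rintro ⟨x, hx, h⟩
    exact ⟨x, hx, (mem_cube_iff n k x).mp h⟩
  · rintro ⟨x, hx, rfl⟩
    exact ⟨x, hx, (mem_cube_iff n (fl d n x) x).mpr rfl⟩

lemma finite_image (n : ℕ) {X : Set (EuclideanSpace ℝ (Fin d))} (hX : X ⊆ unitBox d) :
    (fl d n '' X).Finite := by
  apply Set.Finite.subset (Set.Finite.pi (fun i : Fin d => Set.finite_Ico (0:ℤ) (2 ^ n)))
  rintro _ ⟨x, hx, rfl⟩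
  intro i _
  have h0 := (hX hx i).1
  have h1 := (hX hx i).2
  have hc : (0:ℝ) < 2 ^ n := by positivity
  constructor
  · exact Int.floor_nonneg.mpr (by positivity)
  · show ⌊x i * 2 ^ n⌋ < 2 ^ n
    rw [Int.floor_lt]
    push_cast
    calc x i * 2 ^ n < 1 * 2 ^ n := by
          exact mul_lt_mul_of_pos_right h1 hc
      _ = 2 ^ n := one_mul _

lemma fl_comp {a b : ℕ} (hab : a ≤ b) (x : EuclideanSpace ℝ (Fin d)) :
    fl d a x = qt d (2 ^ (b - a)) (fl d b x) := by
  funext i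
  show ⌊x i * 2 ^ a⌋ = ⌊x i * 2 ^ b⌋ / 2 ^ (b - a)
  have hM : (0:ℤ) < 2 ^ (b - a) := by positivity
  set z : ℤ := ⌊x i * 2 ^ b⌋ / 2 ^ (b - a) with hz
  have hb : (x i * 2 ^ b) = x i * 2 ^ a * ((2:ℤ) ^ (b - a) : ℤ) := by
    push_cast
    rw [mul_assoc, ← pow_add]
    congr 2
    omega
  have hMr : (0:ℝ) < ((2:ℤ) ^ (b - a) : ℤ) := by exact_mod_cast hM
  rw [Int.floor_eq_iff]
  constructor
  · have h1 : z * 2 ^ (b - a) ≤ ⌊x i * 2 ^ b⌋ := Int.ediv_mul_le _ (ne_of_gt hM)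
    have h2 : ((z * 2 ^ (b - a) : ℤ) : ℝ) ≤ x i * 2 ^ b :=
      le_trans (Int.cast_le.mpr h1) (Int.floor_le _)
    rw [hb] at h2
    push_cast at h2
    have hMr' : (0:ℝ) < 2 ^ (b - a) := by positivity
    exact le_of_mul_le_mul_right h2 hMr'
  · have h1 : ⌊x i * 2 ^ b⌋ < (z + 1) * 2 ^ (b - a) :=
      Int.lt_ediv_add_one_mul_self _ hM
    have h2 : x i * 2 ^ b < (((z + 1) * 2 ^ (b - a) : ℤ) : ℝ) := by
      calc x i * 2 ^ b < (⌊x i * 2 ^ b⌋ : ℝ) + 1 := Int.lt_floor_add_one _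
        _ ≤ _ := by
          rw [← Int.cast_one, ← Int.cast_add, Int.cast_le]; exact Int.add_one_le_iff.mpr h1
    rw [hb] at h2
    push_cast at h2
    have hMr' : (0:ℝ) < 2 ^ (b - a) := by positivity
    exact lt_of_mul_lt_mul_right h2 hMr'.le


/-- covering number at scale `2^{-n}` -/
noncomputable def cnt (d n : ℕ) (X : Set (EuclideanSpace ℝ (Fin d))) : ℕ :=
  (fl d n '' X).ncard

lemma covN_eq_cnt (n : ℕ) (X : Set (EuclideanSpace ℝ (Fin d))) :
    covN d ((2:ℝ) ^ (-(n:ℤ))) X = cnt d n X := covN_eq n X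

/-- generic fiber-sum formula -/
lemma ncard_eq_sum_fibers {α β : Type*} [DecidableEq β] {A : Set α} (hA : A.Finite)
    (g : α → β) :
    A.ncard = ∑ k ∈ (hA.image g).toFinset, (A ∩ g ⁻¹' {k}).ncard := by
  classical
  rw [Set.ncard_eq_toFinset_card A hA, Finset.card_eq_sum_card_image g hA.toFinset]
  have himg : Finset.image g hA.toFinset = (hA.image g).toFinset := by
    ext b; simp [Set.Finite.mem_toFinset]
  rw [himg]
  refine Finset.sum_congr rfl fun k _ => ?_
  rw [Set.ncard_eq_toFinset_card (A ∩ g ⁻¹' {k}) (hA.inter_of_left _)]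
  congr 1
  ext a
  simp [Set.Finite.mem_toFinset]

lemma image_inter_fiber {a b : ℕ} (hab : a ≤ b) (X : Set (EuclideanSpace ℝ (Fin d)))
    (k : Fin d → ℤ) :
    fl d b '' (X ∩ fl d a ⁻¹' {k}) = (fl d b '' X) ∩ qt d (2 ^ (b - a)) ⁻¹' {k} := by
  have h : fl d a ⁻¹' {k} = fl d b ⁻¹' (qt d (2 ^ (b - a)) ⁻¹' {k}) := by
    ext x
    simp [fl_comp hab x]
  rw [h, Set.image_inter_preimage]

lemma image_eq_qt_image {a b : ℕ} (hab : a ≤ b) (X : Set (EuclideanSpace ℝ (Fin d))) :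
    fl d a '' X = qt d (2 ^ (b - a)) '' (fl d b '' X) := by
  rw [← Set.image_comp]
  refine Set.image_congr fun x _ => fl_comp hab x

/-- fiber-sum for `cnt` -/
lemma cnt_sum {a b : ℕ} (hab : a ≤ b) {X : Set (EuclideanSpace ℝ (Fin d))}
    (hX : X ⊆ unitBox d) :
    cnt d b X = ∑ k ∈ (finite_image a hX).toFinset, cnt d b (X ∩ fl d a ⁻¹' {k}) := by
  classical
  have hA : (fl d b '' X).Finite := finite_image b hX
  rw [show cnt d b X = (fl d b '' X).ncard from rfl,
    ncard_eq_sum_fibers hA (qt d (2 ^ (b - a)))]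
  have hfin : (hA.image (qt d (2 ^ (b - a)))).toFinset = (finite_image a hX).toFinset := by
    ext k
    simp only [Set.Finite.mem_toFinset]
    rw [← image_eq_qt_image hab]
  rw [hfin]
  refine Finset.sum_congr rfl fun k _ => ?_
  rw [show cnt d b (X ∩ fl d a ⁻¹' {k}) = (fl d b '' (X ∩ fl d a ⁻¹' {k})).ncard from rfl,
    image_inter_fiber hab]

/-- the fiber of `qt` over `k` is a box of volume `M^d` -/
lemma qt_fiber_eq {M : ℤ} (hM : 0 < M) (k : Fin d → ℤ) :
    qt d M ⁻¹' {k} = ↑(Fintype.piFinset fun i => Finset.Ico (k i * M) (k i * M + M)) := by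
  rw [Fintype.coe_piFinset]
  ext y
  simp only [Set.mem_preimage, Set.mem_singleton_iff, funext_iff, Set.mem_pi,
    Set.mem_univ, forall_true_left, Finset.coe_Ico, Set.mem_Ico, qt]
  refine forall_congr' fun i => ?_
  constructor
  · intro h
    have h1 := Int.ediv_mul_le (y i) (ne_of_gt hM)
    have h2 := Int.lt_ediv_add_one_mul_self (y i) hM
    rw [h] at h1 h2
    constructor
    · exact h1
    · nlinarith
  · rintro ⟨h1, h2⟩
    have hle : k i ≤ y i / M := (Int.le_ediv_iff_mul_le hM).mpr h1
    have hlt : y i / M < k i + 1 := (Int.ediv_lt_iff_lt_mul hM).mpr (by nlinarith)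
    omega

lemma qt_fiber_finite {M : ℤ} (hM : 0 < M) (k : Fin d → ℤ) :
    (qt d M ⁻¹' {k}).Finite := by
  rw [qt_fiber_eq hM]
  exact (Fintype.piFinset _).finite_toSet

lemma qt_fiber_ncard {M : ℤ} (hM : 0 < M) (k : Fin d → ℤ) :
    (qt d M ⁻¹' {k}).ncard = M.toNat ^ d := by
  rw [qt_fiber_eq hM, Set.ncard_coe_finset, Fintype.card_piFinset]
  simp [Int.card_Ico]

/-- capacity bound: a `2^{-a}`-cube contains at most `2^{(b-a)d}` cubes of scale `2^{-b}` -/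
lemma cnt_capacity {a b : ℕ} (hab : a ≤ b) {X : Set (EuclideanSpace ℝ (Fin d))}
    (hX : X ⊆ unitBox d) (k : Fin d → ℤ) :
    cnt d b (X ∩ fl d a ⁻¹' {k}) ≤ 2 ^ ((b - a) * d) := by
  have hM : (0:ℤ) < 2 ^ (b - a) := by positivity
  have h1 : cnt d b (X ∩ fl d a ⁻¹' {k})
      = ((fl d b '' X) ∩ qt d (2 ^ (b - a)) ⁻¹' {k}).ncard := by
    rw [show cnt d b (X ∩ fl d a ⁻¹' {k}) = (fl d b '' (X ∩ fl d a ⁻¹' {k})).ncard from rfl,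
      image_inter_fiber hab]
  rw [h1]
  calc ((fl d b '' X) ∩ qt d (2 ^ (b - a)) ⁻¹' {k}).ncard
      ≤ (qt d (2 ^ (b - a)) ⁻¹' {k}).ncard :=
        Set.ncard_le_ncard Set.inter_subset_right (qt_fiber_finite hM k)
    _ = ((2:ℤ) ^ (b - a)).toNat ^ d := qt_fiber_ncard hM k
    _ = 2 ^ ((b - a) * d) := by
        rw [show ((2:ℤ) ^ (b - a)).toNat = 2 ^ (b - a) by
          rw [show ((2:ℤ) ^ (b - a)) = ((2 ^ (b - a) : ℕ) : ℤ) by push_cast; ring,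
            Int.toNat_natCast]]
        rw [← pow_mul]

/-- coarse counts are smaller -/
lemma cnt_mono {a b : ℕ} (hab : a ≤ b) {X : Set (EuclideanSpace ℝ (Fin d))}
    (hX : X ⊆ unitBox d) : cnt d a X ≤ cnt d b X := by
  rw [show cnt d a X = (fl d a '' X).ncard from rfl, image_eq_qt_image hab]
  exact Set.ncard_image_le (finite_image b hX)

/-- fine counts bounded by coarse counts times capacity -/
lemma cnt_le_coarse {a b : ℕ} (hab : a ≤ b) {X : Set (EuclideanSpace ℝ (Fin d))}
    (hX : X ⊆ unitBox d) : cnt d b X ≤ cnt d a X * 2 ^ ((b - a) * d) := by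
  classical
  rw [cnt_sum hab hX]
  calc ∑ k ∈ (finite_image a hX).toFinset, cnt d b (X ∩ fl d a ⁻¹' {k})
      ≤ ∑ k ∈ (finite_image a hX).toFinset, 2 ^ ((b - a) * d) :=
        Finset.sum_le_sum fun k _ => cnt_capacity hab hX k
    _ = (finite_image a hX).toFinset.card * 2 ^ ((b - a) * d) := by
        rw [Finset.sum_const, smul_eq_mul]
    _ = cnt d a X * 2 ^ ((b - a) * d) := by
        rw [← Set.ncard_eq_toFinset_card _ (finite_image a hX)]
        rfl

lemma cnt_pos {n : ℕ} {X : Set (EuclideanSpace ℝ (Fin d))} (hX : X ⊆ unitBox d)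
    (hne : X.Nonempty) : 0 < cnt d n X :=
  (Set.ncard_pos (finite_image n hX)).mpr (hne.image _)


lemma uniform_cnt {T m : ℕ} {P : Set (EuclideanSpace ℝ (Fin d))} {N : ℕ → ℕ}
    (hN : ∀ j, 1 ≤ j → j ≤ m → ∀ k : Fin d → ℤ,
      (P ∩ dyCube d ((2:ℝ) ^ (-(((j - 1) * T : ℕ) : ℤ))) k).Nonempty →
      covN d ((2:ℝ) ^ (-((j * T : ℕ) : ℤ)))
        (P ∩ dyCube d ((2:ℝ) ^ (-(((j - 1) * T : ℕ) : ℤ))) k) = N j)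
    {j : ℕ} (hj1 : 1 ≤ j) (hjm : j ≤ m) {k : Fin d → ℤ}
    (hne : (P ∩ fl d ((j - 1) * T) ⁻¹' {k}).Nonempty) :
    cnt d (j * T) (P ∩ fl d ((j - 1) * T) ⁻¹' {k}) = N j := by
  rw [← covN_eq_cnt, ← cube_eq_preimage]
  exact hN j hj1 hjm k (by rwa [cube_eq_preimage])

lemma claim_prod {T m : ℕ} {P : Set (EuclideanSpace ℝ (Fin d))} (hP : P ⊆ unitBox d)
    {N : ℕ → ℕ}
    (hN : ∀ j, 1 ≤ j → j ≤ m → ∀ k : Fin d → ℤ,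
      (P ∩ dyCube d ((2:ℝ) ^ (-(((j - 1) * T : ℕ) : ℤ))) k).Nonempty →
      covN d ((2:ℝ) ^ (-((j * T : ℕ) : ℤ)))
        (P ∩ dyCube d ((2:ℝ) ^ (-(((j - 1) * T : ℕ) : ℤ))) k) = N j)
    {jA : ℕ} (hjA1 : 1 ≤ jA) :
    ∀ j₂, jA ≤ j₂ → j₂ ≤ m → ∀ k' : Fin d → ℤ, k' ∈ fl d (jA * T) '' P →
      cnt d (j₂ * T) (P ∩ fl d (jA * T) ⁻¹' {k'}) = ∏ l ∈ Finset.Ioc jA j₂, N l := by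
  intro j₂ hj₂
  induction j₂, hj₂ using Nat.le_induction with
  | base =>
    intro _ k' hk'
    rw [Finset.Ioc_self, Finset.prod_empty]
    show (fl d (jA * T) '' (P ∩ fl d (jA * T) ⁻¹' {k'})).ncard = 1
    rw [Set.image_inter_preimage, Set.inter_eq_right.mpr (by simpa using hk')]
    exact Set.ncard_singleton k'
  | succ j₂ hj₂ IH =>
    intro hj₂m k' hk'
    have hj₂m' : j₂ ≤ m := by omega
    set X := P ∩ fl d (jA * T) ⁻¹' {k'} with hXdef
    have hXsub : X ⊆ unitBox d := fun x hx => hP hx.1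
    have hmul : j₂ * T ≤ (j₂ + 1) * T := Nat.mul_le_mul_right _ (Nat.le_succ _)
    have hab : jA * T ≤ j₂ * T := Nat.mul_le_mul_right _ hj₂
    rw [cnt_sum hmul hXsub]
    have hterm : ∀ k'' ∈ (finite_image (j₂ * T) hXsub).toFinset,
        cnt d ((j₂ + 1) * T) (X ∩ fl d (j₂ * T) ⁻¹' {k''}) = N (j₂ + 1) := by
      intro k'' hk''
      rw [Set.Finite.mem_toFinset] at hk''
      obtain ⟨x, hxX, hfx⟩ := hk''
      have hsub : fl d (j₂ * T) ⁻¹' {k''} ⊆ fl d (jA * T) ⁻¹' {k'} := by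
        intro y hy
        simp only [Set.mem_preimage, Set.mem_singleton_iff] at hy ⊢
        calc fl d (jA * T) y = qt d (2 ^ (j₂ * T - jA * T)) (fl d (j₂ * T) y) :=
              fl_comp hab y
          _ = qt d (2 ^ (j₂ * T - jA * T)) (fl d (j₂ * T) x) := by rw [hy, hfx]
          _ = fl d (jA * T) x := (fl_comp hab x).symm
          _ = k' := hxX.2
      have hXk : X ∩ fl d (j₂ * T) ⁻¹' {k''} = P ∩ fl d (j₂ * T) ⁻¹' {k''} := by
        rw [hXdef]
        ext y
        constructor
        · rintro ⟨⟨h1, _⟩, h2⟩; exact ⟨h1, h2⟩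
        · rintro ⟨h1, h2⟩; exact ⟨⟨h1, hsub h2⟩, h2⟩
      rw [hXk]
      have hne : (P ∩ fl d ((j₂ + 1 - 1) * T) ⁻¹' {k''}).Nonempty := by
        refine ⟨x, hxX.1, ?_⟩
        simpa using hfx
      have := uniform_cnt hN (j := j₂ + 1) (by omega) (by omega) hne
      simpa using this
    rw [Finset.sum_congr rfl hterm, Finset.sum_const, smul_eq_mul]
    have hcard : (finite_image (j₂ * T) hXsub).toFinset.card = cnt d (j₂ * T) X := by
      rw [← Set.ncard_eq_toFinset_card _ (finite_image (j₂ * T) hXsub)]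
      rfl
    rw [hcard, IH hj₂m' k' hk', Finset.prod_Ioc_succ_top hj₂]

lemma cnt_P_factor {T m : ℕ} {P : Set (EuclideanSpace ℝ (Fin d))} (hP : P ⊆ unitBox d)
    {N : ℕ → ℕ}
    (hN : ∀ j, 1 ≤ j → j ≤ m → ∀ k : Fin d → ℤ,
      (P ∩ dyCube d ((2:ℝ) ^ (-(((j - 1) * T : ℕ) : ℤ))) k).Nonempty →
      covN d ((2:ℝ) ^ (-((j * T : ℕ) : ℤ)))
        (P ∩ dyCube d ((2:ℝ) ^ (-(((j - 1) * T : ℕ) : ℤ))) k) = N j)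
    {jA j₂ : ℕ} (hjA1 : 1 ≤ jA) (hj₂ : jA ≤ j₂) (hj₂m : j₂ ≤ m) :
    cnt d (j₂ * T) P = cnt d (jA * T) P * ∏ l ∈ Finset.Ioc jA j₂, N l := by
  classical
  have hab : jA * T ≤ j₂ * T := Nat.mul_le_mul_right _ hj₂
  rw [cnt_sum hab hP]
  have hterm : ∀ k' ∈ (finite_image (jA * T) hP).toFinset,
      cnt d (j₂ * T) (P ∩ fl d (jA * T) ⁻¹' {k'}) = ∏ l ∈ Finset.Ioc jA j₂, N l := by
    intro k' hk'
    rw [Set.Finite.mem_toFinset] at hk'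
    exact claim_prod hP hN hjA1 j₂ hj₂ hj₂m k' hk'
  rw [Finset.sum_congr rfl hterm, Finset.sum_const, smul_eq_mul]
  congr 1
  rw [← Set.ncard_eq_toFinset_card _ (finite_image (jA * T) hP)]
  rfl


lemma inter_fiber_absorb {a b : ℕ} (hab : a ≤ b) {P : Set (EuclideanSpace ℝ (Fin d))}
    {k k'' : Fin d → ℤ} (h : k'' ∈ fl d b '' (P ∩ fl d a ⁻¹' {k})) :
    (P ∩ fl d a ⁻¹' {k}) ∩ fl d b ⁻¹' {k''} = P ∩ fl d b ⁻¹' {k''} := by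
  obtain ⟨x, hxX, hfx⟩ := h
  have hsub : fl d b ⁻¹' {k''} ⊆ fl d a ⁻¹' {k} := by
    intro y hy
    simp only [Set.mem_preimage, Set.mem_singleton_iff] at hy ⊢
    calc fl d a y = qt d (2 ^ (b - a)) (fl d b y) := fl_comp hab y
      _ = qt d (2 ^ (b - a)) (fl d b x) := by rw [hy, hfx]
      _ = fl d a x := (fl_comp hab x).symm
      _ = k := hxX.2
  ext y
  constructor
  · rintro ⟨⟨h1, _⟩, h2⟩; exact ⟨h1, h2⟩
  · rintro ⟨h1, h2⟩; exact ⟨⟨h1, hsub h2⟩, h2⟩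

lemma rpow_helper (n : ℕ) (t : ℝ) : ((2:ℝ) ^ (-(n:ℤ))) ^ (-t) = ((2:ℝ) ^ n) ^ t := by
  rw [← Real.rpow_intCast 2 (-(n:ℤ)), ← Real.rpow_mul (by norm_num : (0:ℝ) ≤ 2),
    ← Real.rpow_natCast 2 n, ← Real.rpow_mul (by norm_num : (0:ℝ) ≤ 2)]
  congr 1
  push_cast
  ring

end Stmt12

set_option maxHeartbeats 2000000 in
open Stmt12 in
/-- if `P ⊆ [0,1)^d` is `{2^{-jT}}_{j=1}^m`-uniform with
`c·Δ^{-t} ≤ |P|_Δ ≤ C·Δ^{-t}` for all `Δ ∈ [δ,Δ₀]` (`δ = 2^{-mT}`), then for all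
dyadic `δ ≤ r ≤ R ≤ 1` and every dyadic `R`-cube `Q`,
`|P ∩ Q|_r ≲_{d,T,Δ₀} (C/c)(R/r)^t`. -/
theorem stmt12 (d T : ℕ) (Δ₀ : ℝ) (hT : 1 ≤ T) (hΔ₀1 : Δ₀ ≤ 1) :
    ∃ K : ℝ, 0 < K ∧
    ∀ (m : ℕ) (c C t : ℝ) (P : Set (EuclideanSpace ℝ (Fin d))),
      1 ≤ m → 0 < c → 0 < C → 0 ≤ t → t ≤ d →
      (2:ℝ) ^ (-((m * T : ℕ) : ℤ)) < Δ₀ →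
      P ⊆ unitBox d → IsUniform d T m P →
      (∀ Δ : ℝ, (2:ℝ) ^ (-((m * T : ℕ) : ℤ)) ≤ Δ → Δ ≤ Δ₀ →
        c * Δ ^ (-t) ≤ (covN d Δ P : ℝ) ∧ (covN d Δ P : ℝ) ≤ C * Δ ^ (-t)) →
      ∀ i j : ℕ, j ≤ i → i ≤ m * T →
        ∀ k : Fin d → ℤ,
          (covN d ((2:ℝ) ^ (-(i : ℤ))) (P ∩ dyCube d ((2:ℝ) ^ (-(j : ℤ))) k) : ℝ) ≤
            K * (C / c) * (((2:ℝ) ^ (-(j : ℤ))) / ((2:ℝ) ^ (-(i : ℤ)))) ^ t := by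
  classical
  rcases le_or_gt Δ₀ 0 with hΔ₀pos | hΔ₀pos
  · refine ⟨1, one_pos, ?_⟩
    intro m c C t P _ _ _ _ _ hδ _ _ _ _ _ _ _ _
    exact absurd hδ (not_lt.mpr (hΔ₀pos.trans (by positivity)))
  set n₀ : ℕ := ⌈Real.logb 2 Δ₀⁻¹⌉₊ with hn₀def
  have hΔn₀ : (2:ℝ) ^ (-(n₀:ℤ)) ≤ Δ₀ := by
    have h1 : Real.logb 2 Δ₀⁻¹ ≤ (n₀ : ℝ) := Nat.le_ceil _
    have h2 : Δ₀⁻¹ ≤ (2:ℝ) ^ (n₀:ℝ) := by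
      calc Δ₀⁻¹ = (2:ℝ) ^ Real.logb 2 Δ₀⁻¹ :=
            (Real.rpow_logb two_pos (by norm_num) (by positivity)).symm
        _ ≤ (2:ℝ) ^ (n₀:ℝ) := Real.rpow_le_rpow_of_exponent_le one_le_two h1
    rw [Real.rpow_natCast] at h2
    rw [zpow_neg, zpow_natCast]
    exact (inv_le_comm₀ (by positivity) hΔ₀pos).mpr h2
  set K : ℝ := (2:ℝ) ^ (2 * (T * d) + 2 * (d * n₀)) with hKdef
  have hK1 : (1:ℝ) ≤ K := one_le_pow₀ one_le_two
  refine ⟨K, lt_of_lt_of_le one_pos hK1, ?_⟩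
  intro m c C t P hm hc hC ht htd hδ hP hUni hreg i j hji him k
  have hT0 : 0 < T := hT
  obtain ⟨N, -, hN⟩ := hUni
  have hn₀m : n₀ ≤ m * T := by
    rw [hn₀def]
    refine Nat.ceil_le.mpr ?_
    have h2 : (2:ℝ) ^ (-((m * T : ℕ) : ℤ)) = ((2:ℝ) ^ (m*T : ℕ))⁻¹ := by
      rw [zpow_neg, zpow_natCast]
    rw [h2] at hδ
    have h1 : Δ₀⁻¹ < (2:ℝ) ^ (m*T : ℕ) :=
      (inv_lt_comm₀ (by positivity) hΔ₀pos).mp hδ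
    calc Real.logb 2 Δ₀⁻¹ ≤ Real.logb 2 ((2:ℝ) ^ (m*T : ℕ)) :=
          (Real.logb_le_logb one_lt_two (by positivity) (by positivity)).mpr h1.le
      _ = ((m*T : ℕ) : ℝ) := by
          rw [← Real.rpow_natCast 2 (m*T)]
          exact Real.logb_rpow two_pos (by norm_num)
  have hreg' : ∀ n : ℕ, n₀ ≤ n → n ≤ m * T →
      c * ((2:ℝ) ^ n) ^ t ≤ (cnt d n P : ℝ) ∧ (cnt d n P : ℝ) ≤ C * ((2:ℝ) ^ n) ^ t := by
    intro n h1 h2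
    have hlo : (2:ℝ) ^ (-((m * T : ℕ) : ℤ)) ≤ (2:ℝ) ^ (-(n:ℤ)) :=
      zpow_le_zpow_right₀ one_le_two (neg_le_neg (by exact_mod_cast h2))
    have hhi : (2:ℝ) ^ (-(n:ℤ)) ≤ Δ₀ :=
      le_trans (zpow_le_zpow_right₀ one_le_two (neg_le_neg (by exact_mod_cast h1))) hΔn₀
    have h := hreg _ hlo hhi
    rwa [covN_eq_cnt, rpow_helper] at h
  have hcC : c ≤ C := by
    have h1 := (hreg Δ₀ hδ.le le_rfl).1
    have h2 := (hreg Δ₀ hδ.le le_rfl).2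
    have hpos : (0:ℝ) < Δ₀ ^ (-t) := Real.rpow_pos_of_pos hΔ₀pos _
    exact le_of_mul_le_mul_right (h1.trans h2) hpos
  have hU : ∀ n : ℕ, n ≤ m * T → (cnt d n P : ℝ) ≤ C * ((2:ℝ) ^ n) ^ t * 2 ^ (d * n₀) := by
    intro n hn
    have hbase : (1:ℝ) ≤ 2 ^ (d * n₀) := one_le_pow₀ one_le_two
    rcases le_or_gt n₀ n with h | h
    · have h1 := (hreg' n h hn).2
      have hpos : (0:ℝ) ≤ C * ((2:ℝ)^n)^t := by positivity
      nlinarith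
    · have h1 : (cnt d n P : ℝ) ≤ (cnt d n₀ P : ℝ) := by
        exact_mod_cast cnt_mono h.le hP
      have h2 := (hreg' n₀ le_rfl hn₀m).2
      have h3 : ((2:ℝ) ^ n₀) ^ t ≤ ((2:ℝ) ^ n) ^ t * 2 ^ (d * n₀) := by
        have he : ((2:ℝ) ^ n₀) = 2 ^ n * 2 ^ (n₀ - n) := by
          rw [← pow_add]
          congr 1
          omega
        rw [he, Real.mul_rpow (by positivity) (by positivity)]
        have h4 : ((2:ℝ) ^ (n₀ - n)) ^ t ≤ ((2:ℝ) ^ (n₀ - n)) ^ (d:ℝ) :=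
          Real.rpow_le_rpow_of_exponent_le (one_le_pow₀ one_le_two) htd
        have h5 : ((2:ℝ) ^ (n₀ - n)) ^ (d:ℝ) = 2 ^ ((n₀ - n) * d) := by
          rw [Real.rpow_natCast, ← pow_mul]
        have h6 : ((2:ℝ)) ^ ((n₀ - n) * d) ≤ 2 ^ (d * n₀) :=
          pow_le_pow_right₀ one_le_two (by
            calc (n₀ - n) * d ≤ n₀ * d := Nat.mul_le_mul_right _ (Nat.sub_le _ _)
              _ = d * n₀ := Nat.mul_comm _ _)
        have h45 : ((2:ℝ) ^ (n₀ - n)) ^ t ≤ 2 ^ (d * n₀) := by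
          calc ((2:ℝ) ^ (n₀ - n)) ^ t ≤ ((2:ℝ) ^ (n₀ - n)) ^ (d:ℝ) := h4
            _ = 2 ^ ((n₀ - n) * d) := h5
            _ ≤ 2 ^ (d * n₀) := h6
        exact mul_le_mul_of_nonneg_left h45 (by positivity)
      calc (cnt d n P : ℝ) ≤ (cnt d n₀ P : ℝ) := h1
        _ ≤ C * ((2:ℝ)^n₀)^t := h2
        _ ≤ C * (((2:ℝ)^n)^t * 2^(d*n₀)) := mul_le_mul_of_nonneg_left h3 hC.le
        _ = C * ((2:ℝ)^n)^t * 2^(d*n₀) := by ring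
  have hL : ∀ n : ℕ, n ≤ m * T → c * ((2:ℝ) ^ n) ^ t ≤ (cnt d n P : ℝ) * 2 ^ (d * n₀) := by
    intro n hn
    have hbase : (1:ℝ) ≤ 2 ^ (d * n₀) := one_le_pow₀ one_le_two
    rcases le_or_gt n₀ n with h | h
    · have h1 := (hreg' n h hn).1
      have h2 : (0:ℝ) ≤ (cnt d n P : ℝ) := Nat.cast_nonneg _
      nlinarith
    · have h1 : ((2:ℝ) ^ n) ^ t ≤ ((2:ℝ) ^ n₀) ^ t :=
        Real.rpow_le_rpow (by positivity) (pow_le_pow_right₀ one_le_two h.le) ht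
      have h2 := (hreg' n₀ le_rfl hn₀m).1
      have h3 : (cnt d n₀ P : ℝ) ≤ (cnt d n P : ℝ) * 2 ^ ((n₀ - n) * d) := by
        exact_mod_cast cnt_le_coarse h.le hP
      have h4 : ((2:ℝ)) ^ ((n₀ - n) * d) ≤ 2 ^ (d * n₀) :=
        pow_le_pow_right₀ one_le_two (by
          calc (n₀ - n) * d ≤ n₀ * d := Nat.mul_le_mul_right _ (Nat.sub_le _ _)
            _ = d * n₀ := Nat.mul_comm _ _)
      calc c * ((2:ℝ)^n)^t ≤ c * ((2:ℝ)^n₀)^t := mul_le_mul_of_nonneg_left h1 hc.le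
        _ ≤ (cnt d n₀ P : ℝ) := h2
        _ ≤ (cnt d n P : ℝ) * 2 ^ ((n₀ - n) * d) := h3
        _ ≤ (cnt d n P : ℝ) * 2 ^ (d * n₀) :=
            mul_le_mul_of_nonneg_left h4 (Nat.cast_nonneg _)
  rw [covN_eq_cnt, cube_eq_preimage]
  have hbase2 : ((2:ℝ) ^ (-(j:ℤ))) / ((2:ℝ) ^ (-(i:ℤ))) = (2:ℝ) ^ (i - j) := by
    rw [← zpow_sub₀ (two_ne_zero), ← zpow_natCast 2 (i - j)]
    congr 1
    omega
  rw [hbase2]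
  have hrpow1 : (1:ℝ) ≤ ((2:ℝ)^(i-j))^t := by
    calc (1:ℝ) = (1:ℝ) ^ t := (Real.one_rpow t).symm
      _ ≤ ((2:ℝ)^(i-j))^t := Real.rpow_le_rpow zero_le_one (one_le_pow₀ one_le_two) ht
  have hCc1 : (1:ℝ) ≤ C / c := (one_le_div hc).mpr hcC
  obtain ⟨bB, hbB⟩ : ∃ b, b = i / T := ⟨_, rfl⟩
  obtain ⟨jA, hjA⟩ : ∃ a, a = max ((j + T - 1) / T) 1 := ⟨_, rfl⟩
  have hjA1 : 1 ≤ jA := by rw [hjA]; exact le_max_right _ _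
  have hb'le : bB * T ≤ i := by rw [hbB]; exact Nat.div_mul_le_self i T
  have hib : i ≤ bB * T + T := by
    have h2 := Nat.div_add_mod i T
    have h3 : i % T < T := Nat.mod_lt _ hT0
    calc i = T * (i / T) + i % T := h2.symm
      _ ≤ T * (i / T) + T := Nat.add_le_add_left h3.le _
      _ = bB * T + T := by rw [hbB, Nat.mul_comm]
  have hbBm : bB ≤ m := by
    rw [hbB]
    calc i / T ≤ (m * T) / T := Nat.div_le_div_right him
      _ = m := Nat.mul_div_cancel m hT0
  have hja : j ≤ jA * T := by
    rcases Nat.eq_zero_or_pos j with rfl | hj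
    · exact Nat.zero_le _
    have h2 := Nat.div_add_mod (j + T - 1) T
    have h3 : (j + T - 1) % T < T := Nat.mod_lt _ hT0
    have hceil : j ≤ T * ((j + T - 1) / T) := by
      obtain ⟨A, hA⟩ : ∃ A, A = T * ((j + T - 1) / T) := ⟨_, rfl⟩
      obtain ⟨r, hr⟩ : ∃ r, r = (j + T - 1) % T := ⟨_, rfl⟩
      rw [← hA, ← hr] at h2
      rw [← hr] at h3
      rw [← hA]
      omega
    calc j ≤ T * ((j + T - 1) / T) := hceil
      _ = (j + T - 1) / T * T := Nat.mul_comm _ _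
      _ ≤ jA * T := Nat.mul_le_mul_right _ (by rw [hjA]; exact le_max_left _ _)
  have hja2 : jA * T ≤ j + T := by
    rw [hjA]
    rcases le_total ((j + T - 1) / T) 1 with h | h
    · rw [max_eq_right h, one_mul]
      exact Nat.le_add_left T j
    · rw [max_eq_left h]
      calc (j + T - 1) / T * T ≤ j + T - 1 := Nat.div_mul_le_self _ _
        _ ≤ j + T := Nat.sub_le _ _
  rcases le_or_gt jA bB with hcase | hcase
  · -- main case
    have hab1 : jA * T ≤ bB * T := Nat.mul_le_mul_right _ hcase
    have hQsub : (P ∩ fl d j ⁻¹' {k}) ⊆ unitBox d := fun x hx => hP hx.1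
    have hstepA : cnt d (bB * T) (P ∩ fl d j ⁻¹' {k})
        = cnt d (jA * T) (P ∩ fl d j ⁻¹' {k}) * ∏ l ∈ Finset.Ioc jA bB, N l := by
      rw [cnt_sum hab1 hQsub]
      have hterm : ∀ k' ∈ (finite_image (jA * T) hQsub).toFinset,
          cnt d (bB * T) ((P ∩ fl d j ⁻¹' {k}) ∩ fl d (jA * T) ⁻¹' {k'})
            = ∏ l ∈ Finset.Ioc jA bB, N l := by
        intro k' hk'
        rw [Set.Finite.mem_toFinset] at hk'
        rw [inter_fiber_absorb hja hk']
        refine claim_prod hP hN hjA1 bB hcase hbBm k' ?_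
        exact Set.image_mono Set.inter_subset_left hk'
      rw [Finset.sum_congr rfl hterm, Finset.sum_const, smul_eq_mul]
      congr 1
      rw [← Set.ncard_eq_toFinset_card _ (finite_image (jA * T) hQsub)]
      rfl
    have hstepB : cnt d i (P ∩ fl d j ⁻¹' {k})
        ≤ cnt d (bB * T) (P ∩ fl d j ⁻¹' {k}) * 2 ^ ((i - bB * T) * d) :=
      cnt_le_coarse hb'le hQsub
    have hiT : i - bB * T ≤ T :=
      Nat.sub_le_iff_le_add.mpr (hib.trans_eq (Nat.add_comm _ _))
    have hjT : jA * T - j ≤ T :=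
      Nat.sub_le_iff_le_add.mpr (hja2.trans_eq (Nat.add_comm _ _))
    have hcap1 : cnt d (jA * T) (P ∩ fl d j ⁻¹' {k}) ≤ 2 ^ (T * d) := by
      calc cnt d (jA * T) (P ∩ fl d j ⁻¹' {k}) ≤ 2 ^ ((jA * T - j) * d) :=
            cnt_capacity hja hP k
        _ ≤ 2 ^ (T * d) :=
            Nat.pow_le_pow_right (by norm_num) (Nat.mul_le_mul_right _ hjT)
    have hnat : cnt d i (P ∩ fl d j ⁻¹' {k})
        ≤ 2 ^ (T * d) * (∏ l ∈ Finset.Ioc jA bB, N l) * 2 ^ (T * d) := by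
      calc cnt d i (P ∩ fl d j ⁻¹' {k})
          ≤ cnt d (bB * T) (P ∩ fl d j ⁻¹' {k}) * 2 ^ ((i - bB * T) * d) := hstepB
        _ = cnt d (jA * T) (P ∩ fl d j ⁻¹' {k}) * (∏ l ∈ Finset.Ioc jA bB, N l)
              * 2 ^ ((i - bB * T) * d) := by rw [hstepA]
        _ ≤ 2 ^ (T * d) * (∏ l ∈ Finset.Ioc jA bB, N l) * 2 ^ (T * d) :=
            Nat.mul_le_mul (Nat.mul_le_mul_right _ hcap1)
              (Nat.pow_le_pow_right (by norm_num) (Nat.mul_le_mul_right _ hiT))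
    have hF7 : cnt d (bB * T) P = cnt d (jA * T) P * ∏ l ∈ Finset.Ioc jA bB, N l :=
      cnt_P_factor hP hN hjA1 hcase hbBm
    have hjAm : jA ≤ m := le_trans hcase hbBm
    have hLa := hL (jA * T) (Nat.mul_le_mul_right _ hjAm)
    have hUb := hU (bB * T) (Nat.mul_le_mul_right _ hbBm)
    have hMr : c * ((2:ℝ) ^ (jA * T)) ^ t * (∏ l ∈ Finset.Ioc jA bB, N l : ℕ)
        ≤ C * ((2:ℝ) ^ (bB * T)) ^ t * 2 ^ (d * n₀) * 2 ^ (d * n₀) := by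
      have h1 : c * ((2:ℝ) ^ (jA * T)) ^ t * (∏ l ∈ Finset.Ioc jA bB, N l : ℕ)
          ≤ (cnt d (jA * T) P : ℝ) * 2 ^ (d * n₀) * (∏ l ∈ Finset.Ioc jA bB, N l : ℕ) :=
        mul_le_mul_of_nonneg_right hLa (Nat.cast_nonneg _)
      have h2 : (cnt d (jA * T) P : ℝ) * 2 ^ (d * n₀) * (∏ l ∈ Finset.Ioc jA bB, N l : ℕ)
          = (cnt d (bB * T) P : ℝ) * 2 ^ (d * n₀) := by
        rw [hF7]
        push_cast
        ring
      have h3 : (cnt d (bB * T) P : ℝ) * 2 ^ (d * n₀)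
          ≤ C * ((2:ℝ) ^ (bB * T)) ^ t * 2 ^ (d * n₀) * 2 ^ (d * n₀) :=
        mul_le_mul_of_nonneg_right hUb (by positivity)
      linarith
    have hexp : ((2:ℝ) ^ (bB * T)) ^ t ≤ ((2:ℝ) ^ (jA * T)) ^ t * ((2:ℝ) ^ (i - j)) ^ t := by
      rw [← Real.mul_rpow (by positivity) (by positivity), ← pow_add]
      refine Real.rpow_le_rpow (by positivity) (pow_le_pow_right₀ one_le_two ?_) ht
      calc bB * T ≤ i := hb'le
        _ = j + (i - j) := by omega
        _ ≤ jA * T + (i - j) := Nat.add_le_add_right hja _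
    have hkey : c * ((2:ℝ) ^ (jA * T)) ^ t * (∏ l ∈ Finset.Ioc jA bB, N l : ℕ)
        ≤ C * ((2:ℝ) ^ (jA * T)) ^ t * ((2:ℝ) ^ (i - j)) ^ t
          * (2 ^ (d * n₀) * 2 ^ (d * n₀)) := by
      calc c * ((2:ℝ) ^ (jA * T)) ^ t * (∏ l ∈ Finset.Ioc jA bB, N l : ℕ)
          ≤ C * ((2:ℝ) ^ (bB * T)) ^ t * 2 ^ (d * n₀) * 2 ^ (d * n₀) := hMr
        _ ≤ C * (((2:ℝ) ^ (jA * T)) ^ t * ((2:ℝ) ^ (i - j)) ^ t)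
              * 2 ^ (d * n₀) * 2 ^ (d * n₀) := by
            have hp : (0:ℝ) ≤ (2:ℝ) ^ (d * n₀) := by positivity
            exact mul_le_mul_of_nonneg_right
              (mul_le_mul_of_nonneg_right (mul_le_mul_of_nonneg_left hexp hC.le) hp) hp
        _ = C * ((2:ℝ) ^ (jA * T)) ^ t * ((2:ℝ) ^ (i - j)) ^ t
              * (2 ^ (d * n₀) * 2 ^ (d * n₀)) := by ring
    have hMle : ((∏ l ∈ Finset.Ioc jA bB, N l : ℕ) : ℝ)
        ≤ (C / c) * ((2:ℝ) ^ (i - j)) ^ t * (2 ^ (d * n₀) * 2 ^ (d * n₀)) := by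
      have hpos : (0:ℝ) < c * ((2:ℝ) ^ (jA * T)) ^ t := by positivity
      rw [← mul_le_mul_iff_of_pos_left hpos]
      calc c * ((2:ℝ) ^ (jA * T)) ^ t * (∏ l ∈ Finset.Ioc jA bB, N l : ℕ)
          ≤ C * ((2:ℝ) ^ (jA * T)) ^ t * ((2:ℝ) ^ (i - j)) ^ t
              * (2 ^ (d * n₀) * 2 ^ (d * n₀)) := hkey
        _ = c * ((2:ℝ) ^ (jA * T)) ^ t
              * ((C / c) * ((2:ℝ) ^ (i - j)) ^ t * (2 ^ (d * n₀) * 2 ^ (d * n₀))) := by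
            field_simp
    calc (cnt d i (P ∩ fl d j ⁻¹' {k}) : ℝ)
        ≤ ((2 ^ (T * d) * (∏ l ∈ Finset.Ioc jA bB, N l) * 2 ^ (T * d) : ℕ) : ℝ) :=
          Nat.cast_le.mpr hnat
      _ = 2 ^ (T * d) * 2 ^ (T * d) * ((∏ l ∈ Finset.Ioc jA bB, N l : ℕ) : ℝ) := by
          push_cast
          ring
      _ ≤ 2 ^ (T * d) * 2 ^ (T * d)
            * ((C / c) * ((2:ℝ) ^ (i - j)) ^ t * (2 ^ (d * n₀) * 2 ^ (d * n₀))) :=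
          mul_le_mul_of_nonneg_left hMle (by positivity)
      _ = K * (C / c) * ((2:ℝ) ^ (i - j)) ^ t := by
          have hKeq : K = 2 ^ (T * d) * 2 ^ (T * d) * ((2:ℝ) ^ (d * n₀) * 2 ^ (d * n₀)) := by
            rw [hKdef, show 2 * (T * d) + 2 * (d * n₀) = T * d + T * d + (d * n₀ + d * n₀)
              by ring, pow_add, pow_add, pow_add]
          rw [hKeq]
          ring
  · -- degenerate case : i - j ≤ T
    have h1 : bB * T + T ≤ jA * T := by
      calc bB * T + T = (bB + 1) * T := by ring
        _ ≤ jA * T := Nat.mul_le_mul_right _ hcase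
    have hij : i ≤ j + T := le_trans hib (le_trans h1 hja2)
    have hijT : i - j ≤ T := by omega
    have hcap : cnt d i (P ∩ fl d j ⁻¹' {k}) ≤ 2 ^ ((i - j) * d) := cnt_capacity hji hP k
    have hcast : (cnt d i (P ∩ fl d j ⁻¹' {k}) : ℝ) ≤ 2 ^ ((i - j) * d) := by
      exact_mod_cast hcap
    calc (cnt d i (P ∩ fl d j ⁻¹' {k}) : ℝ) ≤ 2 ^ ((i - j) * d) := hcast
      _ ≤ K := by
          rw [hKdef]
          refine pow_le_pow_right₀ one_le_two ?_
          calc (i - j) * d ≤ T * d := Nat.mul_le_mul_right _ hijT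
            _ ≤ T * d + (T * d + 2 * (d * n₀)) := Nat.le_add_right _ _
            _ = 2 * (T * d) + 2 * (d * n₀) := by ring
      _ = K * 1 * 1 := by ring
      _ ≤ K * (C / c) * ((2:ℝ) ^ (i - j)) ^ t := by
          have hK0 : (0:ℝ) ≤ K := by positivity
          exact mul_le_mul (mul_le_mul_of_nonneg_left hCc1 hK0) hrpow1 zero_le_one
            (by positivity)
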